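/- Let q = 2^{2m}, H the subgroup of F_{q^2}^* of order q+1, and a_1 \in F_q^*. Define N_1^*(a_1) = |\{x \in H : Tr_{q/2}(a_1(x + 1/x)) = 0\}| and N_2^*(a_1) = 1 + 2|\{v \in V : Tr_{q/2}(v) = 0\}| where V = \{a_1(y + 1/y) : y \in F_q^*\} \setminus \{0\}. Then N_1^*(a_1) + N_2^*(a_1) = q. -/

import Mathlib

open Finset Polynomial

section Aux

lemma aux_card_pow_eq_one (F : Type) [Field F] [Fintype F] [DecidableEq F] {n : ℕ} (hn : 0 < n)
    (hd : n ∣ Fintype.card F - 1) :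
    (Finset.univ.filter fun x : F => x ^ n = 1).card = n := by
  obtain ⟨g, hg⟩ := IsCyclic.exists_generator (α := Fˣ)
  have hN : orderOf g = Fintype.card F - 1 := by
    rw [orderOf_eq_card_of_forall_mem_zpowers hg, Nat.card_eq_fintype_card, Fintype.card_units]
  set N := Fintype.card F - 1 with hNdef
  have hN0 : 0 < N := by
    have h1 := Fintype.card_units (α := F)
    have h2 : 0 < Fintype.card Fˣ := Fintype.card_pos
    omega
  have horder : orderOf (g ^ (N / n)) = n := by
    rw [orderOf_pow, hN]
    rw [Nat.gcd_eq_right (Nat.div_dvd_of_dvd hd), Nat.div_div_self hd hN0.ne']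
  have hprim : IsPrimitiveRoot ((g ^ (N / n) : Fˣ) : F) n := by
    have := IsPrimitiveRoot.orderOf ((g ^ (N / n) : Fˣ) : F)
    rwa [orderOf_units, horder] at this
  have : (Finset.univ.filter fun x : F => x ^ n = 1) = nthRootsFinset n (1 : F) := by
    ext x
    simp [mem_nthRootsFinset hn (1 : F)]
  rw [this, hprim.card_nthRootsFinset]

lemma aux_card_two_mul {α β : Type} [DecidableEq α] [DecidableEq β] (s : Finset α) (f : α → β)
    (h : ∀ u ∈ s.image f, (s.filter fun x => f x = u).card = 2) :
    s.card = 2 * (s.image f).card := by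
  rw [Finset.card_eq_sum_card_image f s, Finset.sum_congr rfl h, Finset.sum_const, smul_eq_mul,
    mul_comm]

lemma aux_sq_one {F : Type} [Field F] [CharP F 2] {x : F} (h : x ^ 2 = 1) : x = 1 := by
  have h0 : (x + 1) ^ 2 = 0 := by
    rw [CharTwo.add_sq, h, one_pow, CharTwo.add_self_eq_zero]
  have : x + 1 = 0 := by
    exact pow_eq_zero_iff (n := 2) (by norm_num) |>.mp h0
  have := eq_neg_of_add_eq_zero_left this
  rwa [CharTwo.neg_eq] at this

lemma aux_quad {F : Type} [Field F] [CharP F 2] {a1 x z : F} (ha1 : a1 ≠ 0) (hx : x ≠ 0)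
    (hz : z ≠ 0) (h : a1 * (x + x⁻¹) = a1 * (z + z⁻¹)) : x = z ∨ x = z⁻¹ := by
  have h' : x + x⁻¹ = z + z⁻¹ := mul_left_cancel₀ ha1 h
  have h2 : (2 : F) = 0 := CharTwo.two_eq_zero
  field_simp at h'
  have key : (x + z) * (x * z + 1) = 0 := by
    linear_combination h' + (x * z ^ 2 + x) * h2
  rcases mul_eq_zero.1 key with h0 | h0
  · left
    have := eq_neg_of_add_eq_zero_left h0
    rwa [CharTwo.neg_eq] at this
  · right
    have hxz : x * z = 1 := by linear_combination h0 - h2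
    exact eq_inv_of_mul_eq_one_left hxz

lemma aux_card_fiber {F : Type} [Field F] [Fintype F] [DecidableEq F] [CharP F 2]
    {a1 : F} (ha1 : a1 ≠ 0) (s : Finset F)
    (h0 : ∀ x ∈ s, x ≠ 0) (h1 : ∀ x ∈ s, x ≠ 1) (hinv : ∀ x ∈ s, x⁻¹ ∈ s) :
    s.card = 2 * (s.image (fun x => a1 * (x + x⁻¹))).card := by
  apply aux_card_two_mul
  intro u hu
  obtain ⟨x0, hx0, rfl⟩ := Finset.mem_image.1 hu
  have hx00 := h0 _ hx0
  have heq : (s.filter fun x => a1 * (x + x⁻¹) = a1 * (x0 + x0⁻¹)) = {x0, x0⁻¹} := by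
    ext x
    simp only [Finset.mem_filter, Finset.mem_insert, Finset.mem_singleton]
    constructor
    · rintro ⟨hxs, hfx⟩
      exact aux_quad ha1 (h0 _ hxs) hx00 hfx
    · rintro (rfl | rfl)
      · exact ⟨hx0, rfl⟩
      · exact ⟨hinv _ hx0, by rw [inv_inv, add_comm]⟩
  rw [heq, Finset.card_insert_of_notMem, Finset.card_singleton]
  simp only [Finset.mem_singleton]
  intro hcon
  apply h1 _ hx0
  apply aux_sq_one
  rw [sq]
  nth_rewrite 2 [hcon]
  exact mul_inv_cancel₀ hx00

lemma aux_tr01 {F : Type} [Field F] [CharP F 2] (m q : ℕ) (hq : q = 2 ^ (2 * m))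
    (tr : F → F) (htr : ∀ v : F, tr v = ∑ i ∈ Finset.range (2 * m), v ^ 2 ^ i)
    {u : F} (hu : u ^ q = u) : tr u = 0 ∨ tr u = 1 := by
  haveI : Fact (Nat.Prime 2) := ⟨Nat.prime_two⟩
  have hsq : tr u ^ 2 = ∑ i ∈ Finset.range (2 * m), u ^ 2 ^ (i + 1) := by
    rw [htr, sum_pow_char]
    exact Finset.sum_congr rfl fun i _ => by rw [← pow_mul, ← pow_succ]
  have key : tr u ^ 2 + u = tr u + u ^ q := by
    have l : (∑ i ∈ Finset.range (2 * m), u ^ 2 ^ (i + 1)) + u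
        = ∑ i ∈ Finset.range (2 * m + 1), u ^ 2 ^ i := by
      rw [Finset.sum_range_succ' (fun i => u ^ 2 ^ i) (2 * m)]
      norm_num
    have r : (∑ i ∈ Finset.range (2 * m), u ^ 2 ^ i) + u ^ 2 ^ (2 * m)
        = ∑ i ∈ Finset.range (2 * m + 1), u ^ 2 ^ i := (Finset.sum_range_succ _ _).symm
    rw [hsq, htr, hq, l, ← r]
  rw [hu] at key
  have h1 : tr u ^ 2 = tr u := by
    have := add_right_cancel key
    exact this
  have hz : tr u * (tr u + 1) = 0 := by
    have : tr u * (tr u + 1) = tr u ^ 2 + tr u := by ring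
    rw [this, h1, CharTwo.add_self_eq_zero]
  rcases mul_eq_zero.1 hz with h | h
  · exact Or.inl h
  · right
    have := eq_neg_of_add_eq_zero_left h
    rwa [CharTwo.neg_eq] at this

lemma aux_exists_tr_ne {F : Type} [Field F] [Fintype F] [DecidableEq F]
    (m q : ℕ) (hm : 1 ≤ m) (hq : q = 2 ^ (2 * m))
    (tr : F → F) (htr : ∀ v : F, tr v = ∑ i ∈ Finset.range (2 * m), v ^ 2 ^ i)
    (hK : (Finset.univ.filter fun u : F => u ^ q = u).card = q) :
    ∃ u0 : F, u0 ^ q = u0 ∧ tr u0 ≠ 0 := by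
  by_contra hcon
  push_neg at hcon
  set P : F[X] := ∑ i ∈ Finset.range (2 * m), (X : F[X]) ^ 2 ^ i with hP
  have hcoeff : P.coeff 1 = 1 := by
    rw [hP, Polynomial.finset_sum_coeff]
    rw [Finset.sum_eq_single 0]
    · simp
    · intro i hi hine
      rw [Polynomial.coeff_X_pow, if_neg]
      have : 2 ≤ 2 ^ i := Nat.one_lt_two_pow hine
      omega
    · intro h0
      exact absurd (Finset.mem_range.2 (by omega)) h0
  have hPne : P ≠ 0 := fun h0 => by simp [h0] at hcoeff
  have hdeg : P.natDegree ≤ 2 ^ (2 * m - 1) := by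
    apply Polynomial.natDegree_sum_le_of_forall_le
    intro i hi
    rw [Polynomial.natDegree_X_pow]
    exact Nat.pow_le_pow_right (by norm_num) (by have := Finset.mem_range.1 hi; omega)
  have hsub : (Finset.univ.filter fun u : F => u ^ q = u) ⊆ P.roots.toFinset := by
    intro u hu
    rw [Multiset.mem_toFinset, Polynomial.mem_roots hPne]
    have hequ : Polynomial.eval u P = tr u := by
      rw [hP, Polynomial.eval_finset_sum, htr]
      simp
    rw [Polynomial.IsRoot, hequ]
    exact hcon u (Finset.mem_filter.1 hu).2
  have hle : q ≤ 2 ^ (2 * m - 1) := by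
    calc q = (Finset.univ.filter fun u : F => u ^ q = u).card := hK.symm
      _ ≤ P.roots.toFinset.card := Finset.card_le_card hsub
      _ ≤ Multiset.card P.roots := Multiset.toFinset_card_le _
      _ ≤ P.natDegree := P.card_roots'
      _ ≤ 2 ^ (2 * m - 1) := hdeg
  have : (2 : ℕ) ^ (2 * m - 1) < 2 ^ (2 * m) := Nat.pow_lt_pow_right one_lt_two (by omega)
  omega

end Aux

/-- `N₁*(a₁) + N₂*(a₁) = q`, where `N₁*` counts elements of the subgroup `H` of
order `q+1` of `F_{q^2}^*` with `Tr_{q/2}(a₁(x + 1/x)) = 0`, and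
`N₂* = 1 + 2·|{v ∈ V : Tr_{q/2}(v) = 0}|` for the nonzero values `V` of
`a₁(y + 1/y)` on `F_q^*`. -/
theorem N1_plus_N2_eq_q (m : ℕ) (hm : 1 ≤ m) (q : ℕ) (hq : q = 2 ^ (2 * m))
    (F : Type) [Field F] [Fintype F] [DecidableEq F] (hcard : Fintype.card F = q ^ 2)
    (a1 : F) (ha1 : a1 ≠ 0) (ha1q : a1 ^ q = a1)
    (tr : F → F) (htr : ∀ v : F, tr v = ∑ i ∈ Finset.range (2 * m), v ^ 2 ^ i) :
    (Finset.univ.filter fun x : F =>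
        x ^ (q + 1) = 1 ∧ tr (a1 * (x + x⁻¹)) = 0).card
      + (1 + 2 * (Finset.univ.filter fun v : F =>
          (∃ y : F, y ^ (q - 1) = 1 ∧ v = a1 * (y + y⁻¹)) ∧ v ≠ 0 ∧ tr v = 0).card)
      = q := by
  classical
  haveI : Fact (Nat.Prime 2) := ⟨Nat.prime_two⟩
  -- characteristic 2
  have hq4 : Fintype.card F = 2 ^ (4 * m) := by
    rw [hcard, hq, ← pow_mul]; congr 1; ring
  haveI : CharP F (ringChar F) := ringChar.charP F
  obtain ⟨n, hpp, hcardp⟩ := FiniteField.card F (ringChar F)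
  have hp2 : ringChar F = 2 := by
    have hdvd : ringChar F ∣ 2 ^ (4 * m) := by
      rw [← hq4, hcardp]
      exact dvd_pow_self _ n.ne_zero
    exact (Nat.prime_dvd_prime_iff_eq hpp Nat.prime_two).1 (hpp.dvd_of_dvd_pow hdvd)
  haveI : CharP F 2 := ringChar.of_eq hp2
  have hm4 : 4 ≤ q := by
    rw [hq]
    calc (4:ℕ) = 2 ^ 2 := by norm_num
      _ ≤ 2 ^ (2 * m) := Nat.pow_le_pow_right (by norm_num) (by omega)
  have hqpow : ∀ a b : F, (a + b) ^ q = a ^ q + b ^ q := by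
    intro a b; rw [hq]; exact add_pow_char_pow a b 2 (2 * m)
  -- cardinalities of root sets
  have hNfact : Fintype.card F - 1 = (q - 1) * (q + 1) := by
    have h1 : q ^ 2 = (q - 1) * (q + 1) + 1 := by
      obtain ⟨k, rfl⟩ : ∃ k, q = k + 1 := ⟨q - 1, by omega⟩
      have : (k + 1) ^ 2 = k * (k + 2) + 1 := by ring
      simpa using this
    rw [hcard]; omega
  have cardH : (Finset.univ.filter fun x : F => x ^ (q + 1) = 1).card = q + 1 :=
    aux_card_pow_eq_one F (by omega) (by rw [hNfact]; exact ⟨q - 1, by ring⟩)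
  have cardK : (Finset.univ.filter fun y : F => y ^ (q - 1) = 1).card = q - 1 :=
    aux_card_pow_eq_one F (by omega) (by rw [hNfact]; exact ⟨q + 1, rfl⟩)
  -- basic facts
  have htr0 : tr 0 = 0 := by
    rw [htr]
    exact Finset.sum_eq_zero fun i _ => zero_pow (by positivity)
  have hne0H : ∀ x : F, x ^ (q + 1) = 1 → x ≠ 0 := by
    intro x hx h0
    rw [h0, zero_pow (by omega)] at hx
    exact zero_ne_one hx
  have hKiff : ∀ y : F, y ^ (q - 1) = 1 ↔ (y ≠ 0 ∧ y ^ q = y) := by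
    intro y
    constructor
    · intro hy
      have hy0 : y ≠ 0 := by
        intro h0
        rw [h0, zero_pow (by omega)] at hy
        exact zero_ne_one hy
      refine ⟨hy0, ?_⟩
      have : y ^ q = y ^ (q - 1) * y := by
        rw [← pow_succ]; congr 1; omega
      rw [this, hy, one_mul]
    · rintro ⟨hy0, hyq⟩
      have h : y ^ (q - 1) * y = 1 * y := by
        rw [← pow_succ, show q - 1 + 1 = q by omega, hyq, one_mul]
      exact mul_right_cancel₀ hy0 h
  have hxq_inv : ∀ x : F, x ^ (q + 1) = 1 → x ^ q = x⁻¹ := by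
    intro x hx
    have : x ^ q * x = 1 := by rw [← pow_succ]; exact hx
    exact eq_inv_of_mul_eq_one_left this
  have hfqH : ∀ x : F, x ^ (q + 1) = 1 → (a1 * (x + x⁻¹)) ^ q = a1 * (x + x⁻¹) := by
    intro x hx
    have hxq := hxq_inv x hx
    rw [mul_pow, hqpow, ha1q, hxq, inv_pow, hxq, inv_inv, add_comm]
  have hfqK : ∀ y : F, y ^ (q - 1) = 1 → (a1 * (y + y⁻¹)) ^ q = a1 * (y + y⁻¹) := by
    intro y hy
    obtain ⟨hy0, hyq⟩ := (hKiff y).1 hy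
    rw [mul_pow, hqpow, ha1q, hyq, inv_pow, hyq]
  have hfne : ∀ x : F, x ≠ 0 → x ≠ 1 → a1 * (x + x⁻¹) ≠ 0 := by
    intro x hx0 hx1 hcon
    rcases mul_eq_zero.1 hcon with h | h
    · exact ha1 h
    · apply hx1
      apply aux_sq_one
      have hinv : x = x⁻¹ := by
        have := eq_neg_of_add_eq_zero_left h
        rwa [CharTwo.neg_eq] at this
      rw [sq]
      nth_rewrite 2 [hinv]
      exact mul_inv_cancel₀ hx0
  have hf1 : a1 * ((1:F) + 1⁻¹) = 0 := by
    rw [inv_one, CharTwo.add_self_eq_zero, mul_zero]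
  -- the two value sets
  set sH : Finset F := Finset.univ.filter (fun x : F => x ^ (q + 1) = 1 ∧ x ≠ 1) with hsH
  set sK : Finset F := Finset.univ.filter (fun y : F => y ^ (q - 1) = 1 ∧ y ≠ 1) with hsK
  set A : Finset F := sH.image (fun x => a1 * (x + x⁻¹)) with hA
  set B : Finset F := sK.image (fun x => a1 * (x + x⁻¹)) with hB
  have hsH_card : sH.card = q := by
    have he : sH = (Finset.univ.filter fun x : F => x ^ (q + 1) = 1).erase 1 := by
      ext x
      simp only [hsH, Finset.mem_filter, Finset.mem_univ, true_and, Finset.mem_erase]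
      tauto
    rw [he, Finset.card_erase_of_mem (by simp), cardH]
    omega
  have hsK_card : sK.card = q - 2 := by
    have he : sK = (Finset.univ.filter fun y : F => y ^ (q - 1) = 1).erase 1 := by
      ext y
      simp only [hsK, Finset.mem_filter, Finset.mem_univ, true_and, Finset.mem_erase]
      tauto
    rw [he, Finset.card_erase_of_mem (by simp), cardK]
    omega
  have hsH_mem : ∀ x : F, x ∈ sH ↔ (x ^ (q + 1) = 1 ∧ x ≠ 1) := by
    intro x; simp [hsH]
  have hsK_mem : ∀ y : F, y ∈ sK ↔ (y ^ (q - 1) = 1 ∧ y ≠ 1) := by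
    intro y; simp [hsK]
  have hsH_inv : ∀ x ∈ sH, x⁻¹ ∈ sH := by
    intro x hx
    rw [hsH_mem] at hx ⊢
    refine ⟨by rw [inv_pow, hx.1, inv_one], fun h => hx.2 (by rwa [inv_eq_one] at h)⟩
  have hsK_inv : ∀ y ∈ sK, y⁻¹ ∈ sK := by
    intro y hy
    rw [hsK_mem] at hy ⊢
    refine ⟨by rw [inv_pow, hy.1, inv_one], fun h => hy.2 (by rwa [inv_eq_one] at h)⟩
  have hAcard : 2 * A.card = q := by
    have := aux_card_fiber ha1 sH (fun x hx => hne0H x ((hsH_mem x).1 hx).1)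
      (fun x hx => ((hsH_mem x).1 hx).2) hsH_inv
    rw [hA, ← this, hsH_card]
  have hBcard : 2 * B.card = q - 2 := by
    have := aux_card_fiber ha1 sK (fun y hy => ((hKiff y).1 ((hsK_mem y).1 hy).1).1)
      (fun y hy => ((hsK_mem y).1 hy).2) hsK_inv
    rw [hB, ← this, hsK_card]
  have hAsub : A ⊆ Finset.univ.filter (fun y : F => y ^ (q - 1) = 1) := by
    intro u hu
    rw [hA] at hu
    obtain ⟨x, hx, rfl⟩ := Finset.mem_image.1 hu
    rw [hsH_mem] at hx
    simp only [Finset.mem_filter, Finset.mem_univ, true_and]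
    exact (hKiff _).2 ⟨hfne x (hne0H x hx.1) hx.2, hfqH x hx.1⟩
  have hBsub : B ⊆ Finset.univ.filter (fun y : F => y ^ (q - 1) = 1) := by
    intro u hu
    rw [hB] at hu
    obtain ⟨y, hy, rfl⟩ := Finset.mem_image.1 hu
    rw [hsK_mem] at hy
    simp only [Finset.mem_filter, Finset.mem_univ, true_and]
    exact (hKiff _).2 ⟨hfne y ((hKiff y).1 hy.1).1 hy.2, hfqK y hy.1⟩
  have hdisj : Disjoint A B := by
    rw [Finset.disjoint_left]
    intro u huA huB
    rw [hA] at huA; rw [hB] at huB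
    obtain ⟨x, hx, rfl⟩ := Finset.mem_image.1 huA
    obtain ⟨y, hy, hxy⟩ := Finset.mem_image.1 huB
    rw [hsH_mem] at hx; rw [hsK_mem] at hy
    have hx0 := hne0H x hx.1
    have hy0 := ((hKiff y).1 hy.1).1
    have hcases := aux_quad ha1 hx0 hy0 hxy.symm
    have hxK : x ^ (q - 1) = 1 := by
      rcases hcases with rfl | rfl
      · exact hy.1
      · rw [inv_pow, hy.1, inv_one]
    apply hx.2
    apply aux_sq_one
    have : x ^ (q + 1) = x ^ (q - 1) * x ^ 2 := by
      rw [← pow_add]; congr 1; omega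
    rw [this, hxK, one_mul] at hx
    exact hx.1
  have hunion : A ∪ B = Finset.univ.filter (fun y : F => y ^ (q - 1) = 1) := by
    apply Finset.eq_of_subset_of_card_le (Finset.union_subset hAsub hBsub)
    rw [Finset.card_union_of_disjoint hdisj, cardK]
    omega
  -- trace counting on the subfield
  have hKfull_card : (Finset.univ.filter fun u : F => u ^ q = u).card = q := by
    have h01 : (Finset.univ.filter fun u : F => u ^ q = u)
        = insert 0 (Finset.univ.filter fun y : F => y ^ (q - 1) = 1) := by
      ext u
      simp only [Finset.mem_filter, Finset.mem_univ, true_and, Finset.mem_insert]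
      constructor
      · intro h
        by_cases h0 : u = 0
        · exact Or.inl h0
        · exact Or.inr ((hKiff u).2 ⟨h0, h⟩)
      · rintro (rfl | h)
        · exact zero_pow (by omega)
        · exact ((hKiff u).1 h).2
    have h0n : (0:F) ∉ (Finset.univ.filter fun y : F => y ^ (q - 1) = 1) := by
      simp only [Finset.mem_filter, Finset.mem_univ, true_and]
      rw [zero_pow (by omega)]
      exact zero_ne_one
    rw [h01, Finset.card_insert_of_notMem h0n, cardK]
    omega
  obtain ⟨u0, hu0K, hu0ne⟩ := aux_exists_tr_ne m q hm hq tr htr hKfull_card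
  have htr01 : ∀ u : F, u ^ q = u → tr u = 0 ∨ tr u = 1 := fun u hu => aux_tr01 m q hq tr htr hu
  have hu0_1 : tr u0 = 1 := (htr01 u0 hu0K).resolve_left hu0ne
  have htradd : ∀ u v : F, tr (u + v) = tr u + tr v := by
    intro u v
    rw [htr, htr, htr, ← Finset.sum_add_distrib]
    exact Finset.sum_congr rfl fun i _ => add_pow_char_pow u v 2 i
  have hZW : 2 * ((Finset.univ.filter fun u : F => u ^ q = u).filter fun u => tr u = 0).card
      = q := by
    have hsplit := Finset.card_filter_add_card_filter_not
      (s := Finset.univ.filter fun u : F => u ^ q = u) (p := fun u => tr u = 0)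
    have hbij : ((Finset.univ.filter fun u : F => u ^ q = u).filter fun u => tr u = 0).card
        = ((Finset.univ.filter fun u : F => u ^ q = u).filter fun u => ¬ tr u = 0).card := by
      apply Finset.card_bij (fun u _ => u + u0)
      · intro u hu
        simp only [Finset.mem_filter, Finset.mem_univ, true_and] at hu ⊢
        obtain ⟨huK, hu0'⟩ := hu
        refine ⟨by rw [hqpow, huK, hu0K], ?_⟩
        rw [htradd, hu0', hu0_1, zero_add]
        exact one_ne_zero
      · intro a ha b hb h
        exact add_right_cancel h
      · intro w hw
        simp only [Finset.mem_filter, Finset.mem_univ, true_and] at hw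
        obtain ⟨hwK, hwne⟩ := hw
        have hw1 : tr w = 1 := (htr01 w hwK).resolve_left hwne
        refine ⟨w + u0, ?_, ?_⟩
        · simp only [Finset.mem_filter, Finset.mem_univ, true_and]
          refine ⟨by rw [hqpow, hwK, hu0K], ?_⟩
          rw [htradd, hw1, hu0_1, CharTwo.add_self_eq_zero]
        · rw [add_assoc, CharTwo.add_self_eq_zero, add_zero]
    rw [hKfull_card] at hsplit
    omega
  have hZcard : 2 * ((Finset.univ.filter fun y : F => y ^ (q - 1) = 1).filter
      fun u => tr u = 0).card + 2 = q := by
    have hins : ((Finset.univ.filter fun u : F => u ^ q = u).filter fun u => tr u = 0)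
        = insert 0 ((Finset.univ.filter fun y : F => y ^ (q - 1) = 1).filter
            fun u => tr u = 0) := by
      ext u
      simp only [Finset.mem_filter, Finset.mem_univ, true_and, Finset.mem_insert]
      constructor
      · rintro ⟨huK, hut⟩
        by_cases h0 : u = 0
        · exact Or.inl h0
        · exact Or.inr ⟨(hKiff u).2 ⟨h0, huK⟩, hut⟩
      · rintro (rfl | ⟨h1, h2⟩)
        · exact ⟨zero_pow (by omega), htr0⟩
        · exact ⟨((hKiff u).1 h1).2, h2⟩
    have h0n : (0:F) ∉ ((Finset.univ.filter fun y : F => y ^ (q - 1) = 1).filter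
        fun u => tr u = 0) := by
      simp only [Finset.mem_filter, Finset.mem_univ, true_and, not_and]
      intro h
      rw [zero_pow (by omega)] at h
      exact absurd h zero_ne_one
    rw [hins, Finset.card_insert_of_notMem h0n] at hZW
    omega
  -- put things together
  set A0 : Finset F := A.filter (fun u => tr u = 0) with hA0
  set B0 : Finset F := B.filter (fun u => tr u = 0) with hB0
  have hABZ : A0.card + B0.card
      = ((Finset.univ.filter fun y : F => y ^ (q - 1) = 1).filter fun u => tr u = 0).card := by
    rw [hA0, hB0, ← Finset.card_union_of_disjoint
      (Finset.disjoint_filter_filter hdisj), ← Finset.filter_union, hunion]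
  -- first term
  have hterm1 : (Finset.univ.filter fun x : F =>
      x ^ (q + 1) = 1 ∧ tr (a1 * (x + x⁻¹)) = 0).card = 1 + 2 * A0.card := by
    set sH0 : Finset F := Finset.univ.filter
      (fun x : F => (x ^ (q + 1) = 1 ∧ x ≠ 1) ∧ tr (a1 * (x + x⁻¹)) = 0) with hsH0
    have hsH0_mem : ∀ x : F, x ∈ sH0 ↔ ((x ^ (q + 1) = 1 ∧ x ≠ 1) ∧ tr (a1 * (x + x⁻¹)) = 0) := by
      intro x; simp [hsH0]
    have hins : (Finset.univ.filter fun x : F =>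
        x ^ (q + 1) = 1 ∧ tr (a1 * (x + x⁻¹)) = 0) = insert 1 sH0 := by
      ext x
      simp only [Finset.mem_filter, Finset.mem_univ, true_and, Finset.mem_insert, hsH0_mem]
      constructor
      · rintro ⟨h1, h2⟩
        by_cases hx1 : x = 1
        · exact Or.inl hx1
        · exact Or.inr ⟨⟨h1, hx1⟩, h2⟩
      · rintro (rfl | ⟨⟨h1, _⟩, h2⟩)
        · exact ⟨one_pow _, by rw [hf1, htr0]⟩
        · exact ⟨h1, h2⟩
    have h1n : (1:F) ∉ sH0 := by
      rw [hsH0_mem]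
      tauto
    have hfib : sH0.card = 2 * (sH0.image (fun x => a1 * (x + x⁻¹))).card := by
      apply aux_card_fiber ha1 sH0
      · exact fun x hx => hne0H x ((hsH0_mem x).1 hx).1.1
      · exact fun x hx => ((hsH0_mem x).1 hx).1.2
      · intro x hx
        rw [hsH0_mem] at hx ⊢
        obtain ⟨⟨hx1, hx2⟩, hx3⟩ := hx
        have hfxinv : a1 * (x⁻¹ + x⁻¹⁻¹) = a1 * (x + x⁻¹) := by rw [inv_inv, add_comm]
        refine ⟨⟨by rw [inv_pow, hx1, inv_one], fun h => hx2 (by rwa [inv_eq_one] at h)⟩, ?_⟩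
        rw [hfxinv]
        exact hx3
    have himg : sH0.image (fun x => a1 * (x + x⁻¹)) = A0 := by
      rw [hA0, hA, Finset.filter_image]
      congr 1
      ext x
      simp only [hsH0, hsH, Finset.mem_filter, Finset.mem_univ, true_and]
    rw [hins, Finset.card_insert_of_notMem h1n, hfib, himg]
    omega
  -- second term
  have hterm2 : (Finset.univ.filter fun v : F =>
      (∃ y : F, y ^ (q - 1) = 1 ∧ v = a1 * (y + y⁻¹)) ∧ v ≠ 0 ∧ tr v = 0) = B0 := by
    ext v
    rw [hB0, hB]
    simp only [Finset.mem_filter, Finset.mem_univ, true_and, Finset.mem_image, hsK_mem]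
    constructor
    · rintro ⟨⟨y, hy, rfl⟩, hv0, htrv⟩
      have hy1 : y ≠ 1 := by
        rintro rfl
        exact hv0 hf1
      exact ⟨⟨y, ⟨hy, hy1⟩, rfl⟩, htrv⟩
    · rintro ⟨⟨y, ⟨hy, hy1⟩, rfl⟩, htrv⟩
      exact ⟨⟨y, hy, rfl⟩, hfne y ((hKiff y).1 hy).1 hy1, htrv⟩
  rw [hterm1, hterm2]
  omega
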